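/- Let $q$ be a prime power and $\alpha_1,\ldots,\alpha_n$ distinct elements of $\mathbb{F}_q$ with $4 \le k \le n$ and $A \in \mathrm{GL}_3(\mathbb{F}_q)$. If the $k\times(n+3)$ matrix $G$ (first $n$ columns $(1,\alpha_j,\ldots,\alpha_j^{k-1})^T$, last three columns $(0,\ldots,0,a_{1j},a_{2j},a_{3j})^T$) generates a code equal to a Reed–Solomon code $\mathrm{RS}_k(\beta)$ for some $\beta = (\beta_1,\ldots,\beta_{n+3})$ with distinct entries, then there is a quadratic polynomial agreeing with $x \mapsto \eta/(\beta^* - x)$ at the $k > 3$ distinct points $\alpha_1,\ldots,\alpha_k$ for some $\beta^* \notin \{\alpha_1,\ldots,\alpha_k\}$ and $\eta \neq 0$, a contradiction. Hence $\mathrm{GRL}_k(\alpha, \mathbf{1}, A)$ is not a Reed–Solomon code for $k > 3$. -/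
import Mathlib


open Finset

theorem stmt18 {F : Type*} [Field F] [Fintype F]
    (n k : ℕ) (hk : 3 < k) (hkn : k ≤ n)
    (α : Fin n → F) (hα : Function.Injective α)
    (A : Matrix (Fin 3) (Fin 3) F) (hA : IsUnit A.det)
    (G : Matrix (Fin k) (Fin (n + 3)) F)
    (hG : ∀ i j, G i j =
      if h : (j : ℕ) < n then α ⟨j, h⟩ ^ (i : ℕ)
      else if (i : ℕ) + 3 = k then A 0 ⟨(j : ℕ) - n, by have := j.isLt; omega⟩
      else if (i : ℕ) + 2 = k then A 1 ⟨(j : ℕ) - n, by have := j.isLt; omega⟩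
      else if (i : ℕ) + 1 = k then A 2 ⟨(j : ℕ) - n, by have := j.isLt; omega⟩
      else 0) :
    ∀ β : Fin (n + 3) → F, Function.Injective β →
      LinearMap.range (Matrix.vecMulLinear G) ≠
        LinearMap.range (Matrix.vecMulLinear
          (Matrix.of fun (i : Fin k) (j : Fin (n + 3)) => β j ^ (i : ℕ))) := by
  intro β hβ h
  haveI : NeZero k := ⟨by omega⟩
  set i0 : Fin k := ⟨0, by omega⟩ with hi0
  -- Row 0 of G is (1,...,1,0,0,0); it lies in the range of vecMulLinear G.
  have h0 : G i0 ∈ LinearMap.range (Matrix.vecMulLinear G) := by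
    refine ⟨Pi.single i0 1, ?_⟩
    ext j
    simp [Matrix.vecMulLinear_apply, Matrix.vecMul, dotProduct,
      Pi.single_apply, Finset.sum_ite_eq']
  rw [h] at h0
  obtain ⟨c, hc⟩ := h0
  -- Build the polynomial f = Σ c i • X^i.
  set f : Polynomial F := ∑ i : Fin k, Polynomial.C (c i) * Polynomial.X ^ (i : ℕ) with hf
  have heval : ∀ j : Fin (n + 3), f.eval (β j) = G i0 j := by
    intro j
    have := congrFun hc j
    simp only [Matrix.vecMulLinear_apply, Matrix.vecMul, dotProduct,
      Matrix.of_apply] at this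
    rw [← this, hf]
    simp [Polynomial.eval_finset_sum]
  have hdeg : (f - 1).natDegree < k := by
    have h1 : f.natDegree < k := by
      apply lt_of_le_of_lt (Polynomial.natDegree_sum_le _ _)
      rcases Finset.univ.eq_empty_or_nonempty (α := Fin k) with he | hne
      · simp [he]; omega
      · rw [Finset.fold_max_lt]
        refine ⟨by omega, fun i _ => ?_⟩
        exact lt_of_le_of_lt (Polynomial.natDegree_C_mul_X_pow_le _ _) i.isLt
    calc (f - 1).natDegree ≤ max f.natDegree (1 : Polynomial F).natDegree :=
          Polynomial.natDegree_sub_le _ _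
      _ < k := by simpa using h1
  -- f - 1 vanishes at the n distinct points β ∘ (castLE)
  have hzero : f - 1 = 0 := by
    apply Polynomial.eq_zero_of_natDegree_lt_card_of_eval_eq_zero (f := fun j : Fin n =>
      β (Fin.castLE (by omega) j))
    · exact fun a b hab => by
        have := hβ hab; exact Fin.castLE_injective _ this
    · intro j
      have := heval (Fin.castLE (by omega) j)
      rw [hG] at this
      simp only [Fin.coe_castLE, j.isLt, dif_pos, hi0, pow_zero] at this
      simp [this]
    · simpa using lt_of_lt_of_le hdeg hkn
  -- But f(β ⟨n⟩) = 0 while f = 1.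
  have hlast := heval ⟨n, by omega⟩
  rw [hG] at hlast
  have hk3 : ¬ (i0 : ℕ) + 3 = k := by simp [hi0]; omega
  have hk2 : ¬ (i0 : ℕ) + 2 = k := by simp [hi0]; omega
  have hk1 : ¬ (i0 : ℕ) + 1 = k := by simp [hi0]; omega
  simp only [lt_irrefl, dif_neg, not_lt_of_ge (le_refl n), hk3, hk2, hk1,
    if_false] at hlast
  have : f = 1 := by linear_combination (norm := ring_nf) hzero
  rw [this] at hlast
  simp at hlast
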